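/- The point-insertion rule f is Möbius invariant: for any Möbius transformation M of the extended complex plane and pairwise distinct a,b,c,d, f(M(a),M(b),M(c),M(d)) = M(f(a,b,c,d)). -/

import Mathlib

open Complex

/-- Complex cross-ratio. -/
noncomputable def crC (a b c d : ℂ) : ℂ := (a - b) * (c - d) / ((b - c) * (d - a))

/-- Principal square root of the cross-ratio `cr(c,a,b,d)`. -/
noncomputable def sqrtQ (a b c d : ℂ) : ℂ := (crC c a b d) ^ ((1 : ℂ) / 2)

/-- The point-insertion rule. -/
noncomputable def fIns (a b c d : ℂ) : ℂ :=
  (c * (b - a) * sqrtQ a b c d + b * (c - a)) / ((b - a) * sqrtQ a b c d + (c - a))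

/-- A Möbius transformation of the complex plane. -/
noncomputable def moebius (α β γ δ : ℂ) (z : ℂ) : ℂ := (α * z + β) / (γ * z + δ)

theorem stmt5 (α β γ δ : ℂ) (hM : α * δ - β * γ ≠ 0)
    (a b c d : ℂ)
    (hab : a ≠ b) (hac : a ≠ c) (had : a ≠ d) (hbc : b ≠ c) (hbd : b ≠ d) (hcd : c ≠ d)
    (hMa : γ * a + δ ≠ 0) (hMb : γ * b + δ ≠ 0) (hMc : γ * c + δ ≠ 0) (hMd : γ * d + δ ≠ 0)
    (hMf : γ * fIns a b c d + δ ≠ 0)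
    (hden : (b - a) * sqrtQ a b c d + (c - a) ≠ 0)
    (hden' : (moebius α β γ δ b - moebius α β γ δ a) *
        sqrtQ (moebius α β γ δ a) (moebius α β γ δ b) (moebius α β γ δ c) (moebius α β γ δ d) +
        (moebius α β γ δ c - moebius α β γ δ a) ≠ 0) :
    fIns (moebius α β γ δ a) (moebius α β γ δ b) (moebius α β γ δ c) (moebius α β γ δ d) =
      moebius α β γ δ (fIns a b c d) := by
  have hab' : a - b ≠ 0 := sub_ne_zero.mpr hab
  have hdc' : d - c ≠ 0 := sub_ne_zero.mpr (Ne.symm hcd)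
  have hsub : ∀ x y : ℂ, γ * x + δ ≠ 0 → γ * y + δ ≠ 0 →
      moebius α β γ δ x - moebius α β γ δ y
        = (α * δ - β * γ) * (x - y) / ((γ * x + δ) * (γ * y + δ)) := by
    intro x y hx hy
    unfold moebius
    rw [div_sub_div _ _ hx hy]
    ring
  have hcr : crC (moebius α β γ δ c) (moebius α β γ δ a) (moebius α β γ δ b)
      (moebius α β γ δ d) = crC c a b d := by
    unfold crC
    rw [hsub c a hMc hMa, hsub b d hMb hMd, hsub a b hMa hMb, hsub d c hMd hMc]
    field_simp
  have hs : sqrtQ (moebius α β γ δ a) (moebius α β γ δ b) (moebius α β γ δ c)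
      (moebius α β γ δ d) = sqrtQ a b c d := by
    unfold sqrtQ; rw [hcr]
  set s : ℂ := sqrtQ a b c d with hsdef
  set P : ℂ := (α * c + β) * (b - a) * s + (α * b + β) * (c - a) with hP
  set Q : ℂ := (γ * c + δ) * (b - a) * s + (γ * b + δ) * (c - a) with hQ
  set N : ℂ := c * (b - a) * s + b * (c - a) with hN
  set D : ℂ := (b - a) * s + (c - a) with hD
  have hK : (α * δ - β * γ) / ((γ * a + δ) * (γ * b + δ) * (γ * c + δ)) ≠ 0 :=
    div_ne_zero hM (mul_ne_zero (mul_ne_zero hMa hMb) hMc)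
  have hdd : (moebius α β γ δ b - moebius α β γ δ a) * s +
      (moebius α β γ δ c - moebius α β γ δ a)
      = ((α * δ - β * γ) / ((γ * a + δ) * (γ * b + δ) * (γ * c + δ))) * Q := by
    rw [hsub b a hMb hMa, hsub c a hMc hMa, hQ]
    field_simp
  have hnum : moebius α β γ δ c * (moebius α β γ δ b - moebius α β γ δ a) * s +
      moebius α β γ δ b * (moebius α β γ δ c - moebius α β γ δ a)
      = ((α * δ - β * γ) / ((γ * a + δ) * (γ * b + δ) * (γ * c + δ))) * P := by
    rw [hsub b a hMb hMa, hsub c a hMc hMa, hP]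
    unfold moebius
    field_simp
  have hfins : fIns a b c d = N / D := rfl
  have hQ0 : Q ≠ 0 := by
    intro h
    apply hMf
    rw [hfins]
    have : γ * (N / D) + δ = Q / D := by
      rw [mul_div_assoc', div_add' _ _ _ hden, hN, hQ, hD]; ring
    rw [this, h, zero_div]
  have hLHS : fIns (moebius α β γ δ a) (moebius α β γ δ b) (moebius α β γ δ c)
      (moebius α β γ δ d) = P / Q := by
    unfold fIns
    rw [hs, hnum, hdd, mul_div_mul_left _ _ hK]
  have hRHS : moebius α β γ δ (fIns a b c d) = P / Q := by
    rw [hfins]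
    unfold moebius
    have h1 : α * (N / D) + β = P / D := by
      rw [mul_div_assoc', div_add' _ _ _ hden, hN, hP, hD]; ring
    have h2 : γ * (N / D) + δ = Q / D := by
      rw [mul_div_assoc', div_add' _ _ _ hden, hN, hQ, hD]; ring
    rw [h1, h2, div_div_div_eq]
    rw [mul_comm P D, mul_div_mul_left _ _ hden]
  rw [hLHS, hRHS]
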